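/- Let G be a finite group, g_A ∈ G with centralizer N_A, and α a unitary representation of N_A on a finite-dimensional complex Hilbert space V_α. Let H^A_α := {v : G → V_α | v(xn) = α(n⁻¹)v(x) for all x ∈ G, n ∈ N_A}, with inner product ⟨v,w⟩ := Σ_{x∈G} ⟨v(x),w(x)⟩_{V_α}. For F : G×G → ℂ define (π^A_α(F)v)(x) := Σ_{y∈G} F(x g_A x⁻¹, y) v(y⁻¹x). Then: (i) π^A_α(F) maps H^A_α into H^A_α; (ii) π^A_α(F₁•F₂) = π^A_α(F₁) ∘ π^A_α(F₂), where (F₁•F₂)(x,y) := Σ_{z∈G} F₁(x,z) F₂(z⁻¹xz, z⁻¹y); (iii) π^A_α(F*) is the adjoint of π^A_α(F) on H^A_α, where F*(x,y) := conj(F(y⁻¹xy, y⁻¹)). -/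

import Mathlib

open scoped BigOperators

/-- The quantum double product on `C(G × G)` for a finite group `G`. -/
noncomputable def qdConvF {G : Type*} [Group G] [Fintype G]
    (F₁ F₂ : G × G → ℂ) : G × G → ℂ :=
  fun p => ∑ z : G, F₁ (p.1, z) * F₂ (z⁻¹ * p.1 * z, z⁻¹ * p.2)

/-- The involution `F*(x, y) = conj (F (y⁻¹xy, y⁻¹))` on `C(G × G)`. -/
noncomputable def qdStarF {G : Type*} [Group G] (F : G × G → ℂ) : G × G → ℂ :=
  fun p => (starRingEnd ℂ) (F (p.2⁻¹ * p.1 * p.2, p.2⁻¹))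

/-- The operator `(π^A_α(F)v)(x) = ∑_{y ∈ G} F(x g_A x⁻¹, y) v(y⁻¹ x)`. -/
noncomputable def piOp {G : Type*} [Group G] [Fintype G] {V : Type*}
    [AddCommGroup V] [Module ℂ V] (gA : G) (F : G × G → ℂ) (v : G → V) :
    G → V :=
  fun x => ∑ y : G, F (x * gA * x⁻¹, y) • v (y⁻¹ * x)

/-- Membership in the Hilbert space `H^A_α`: the equivariance condition
`v(xn) = α(n⁻¹) v(x)` for all `x ∈ G`, `n ∈ N_A`. -/
def IsEquivariant {G : Type*} [Group G] {V : Type*} [NormedAddCommGroup V]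
    [InnerProductSpace ℂ V] (gA : G)
    (α : Subgroup.centralizer ({gA} : Set G) →* (V ≃ₗᵢ[ℂ] V)) (v : G → V) :
    Prop :=
  ∀ (x : G) (n : Subgroup.centralizer ({gA} : Set G)),
    v (x * (n : G)) = α n⁻¹ (v x)

theorem stmt_8 {G : Type*} [Group G] [Fintype G]
    {V : Type*} [NormedAddCommGroup V] [InnerProductSpace ℂ V]
    [FiniteDimensional ℂ V] (gA : G)
    (α : Subgroup.centralizer ({gA} : Set G) →* (V ≃ₗᵢ[ℂ] V)) :
    -- (i)
    (∀ (F : G × G → ℂ) (v : G → V), IsEquivariant gA α v →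
        IsEquivariant gA α (piOp gA F v)) ∧
    -- (ii)
    (∀ (F₁ F₂ : G × G → ℂ) (v : G → V), IsEquivariant gA α v →
        piOp gA (qdConvF F₁ F₂) v = piOp gA F₁ (piOp gA F₂ v)) ∧
    -- (iii)
    (∀ (F : G × G → ℂ) (v w : G → V), IsEquivariant gA α v →
        IsEquivariant gA α w →
        ∑ x : G, (inner ℂ (piOp gA (qdStarF F) v x) (w x) : ℂ) =
          ∑ x : G, (inner ℂ (v x) (piOp gA F w x) : ℂ)) := by
  refine ⟨?_, ?_, ?_⟩
  · intro F v hv x n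
    have hc : gA * (n : G) = (n : G) * gA :=
      Subgroup.mem_centralizer_iff.mp n.2 gA rfl
    have h1 : x * (n : G) * gA * (x * (n : G))⁻¹ = x * gA * x⁻¹ := by
      rw [mul_assoc x (n : G) gA, ← hc]; group
    simp only [piOp, h1, map_sum]
    refine Finset.sum_congr rfl fun y _ => ?_
    rw [← mul_assoc, hv (y⁻¹ * x) n, map_smul]
  · intro F₁ F₂ v _
    funext x
    simp only [piOp, qdConvF, Finset.sum_smul, smul_smul, Finset.smul_sum]
    rw [Finset.sum_comm]
    refine Finset.sum_congr rfl fun z _ => ?_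
    refine Fintype.sum_equiv (Equiv.mulLeft z⁻¹) _ _ fun y => ?_
    simp only [Equiv.coe_mulLeft]
    rw [show z⁻¹ * (x * gA * x⁻¹) * z = z⁻¹ * x * gA * (z⁻¹ * x)⁻¹ by group,
        show (z⁻¹ * y)⁻¹ * (z⁻¹ * x) = y⁻¹ * x by group]
  · intro F v w _ _
    simp only [piOp, qdStarF, sum_inner, inner_sum, inner_smul_left, inner_smul_right,
      starRingEnd_self_apply, RingHom.id_apply]
    rw [← Fintype.sum_prod_type', ← Fintype.sum_prod_type']
    refine Fintype.sum_equiv ⟨fun p => (p.2⁻¹ * p.1, p.2⁻¹), fun p => (p.2⁻¹ * p.1, p.2⁻¹),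
      fun p => by simp [mul_assoc], fun p => by simp [mul_assoc]⟩ _ _ fun p => ?_
    simp only [Equiv.coe_fn_mk]
    rw [show p.2⁻¹ * (p.1 * gA * p.1⁻¹) * p.2 = (p.2⁻¹ * p.1) * gA * (p.2⁻¹ * p.1)⁻¹ by group,
        show (p.2⁻¹)⁻¹ * (p.2⁻¹ * p.1) = p.1 by group]
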